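/- Let A ⊆ B be rings and let v be an A-valuation on B with kernel p, valuation ring R_v ⊆ k(p), and semi-valuation ring S_v ⊆ B_p. Then v is unbounded if and only if the canonical ring homomorphism B ⊗_A S_v → k(p) is surjective. -/

import Mathlib

/-- A valuation `v` on `B` is *unbounded* (with respect to the subgroup of the value
group generated by its nonzero values, which is the value group in the paper's
convention) if no element of that subgroup strictly bounds all values of `v`. -/
def ValUnbounded {B : Type*} [CommRing B] {Γ : Type*} [LinearOrderedCommGroupWithZero Γ]
    (v : Valuation B Γ) : Prop :=
  ∀ γ ∈ Subgroup.closure {g : Γˣ | (g : Γ) ∈ Set.range v}, ∃ b : B, (γ : Γ) ≤ v b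

/-- let `v` be an `A`-valuation on `B` with kernel `p`, valuation ring
`R_v ⊆ k(p)` and semi-valuation ring `S_v ⊆ B_p`.  Here `k(p)` is modelled by a field
`K` with `φ : B → K` such that every element of `K` is a fraction of elements of `φ(B)`,
`v̄ = vb` is the induced valuation on `K` (so `v = vb ∘ φ` and `R_v = vb.integer`),
`B_p` is modelled by `L` (a localization of `B` at the prime `p = ker φ`) with
`ψ : L → K` the canonical map, and `S_v = ψ⁻¹(R_v)`.  Then `v` is unbounded iff the
canonical map `B ⊗_A S_v → k(p)`, `b ⊗ s ↦ φ b * ψ s`, is surjective, i.e. iff every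
element of `K` is a finite sum `∑ φ (c i) * ψ (s i)` with `s i ∈ S_v`. -/
theorem stmt2 {B K L : Type*} [CommRing B] [Field K] [CommRing L] {Γ : Type*}
    [LinearOrderedCommGroupWithZero Γ]
    (A : Subring B) (φ : B →+* K) (vb : Valuation K Γ)
    [hker : (RingHom.ker φ).IsPrime]
    [Algebra B L] [IsLocalization.AtPrime L (RingHom.ker φ)]
    (ψ : L →+* K) (hψ : ψ.comp (algebraMap B L) = φ)
    (hres : ∀ x : K, ∃ c d : B, φ d ≠ 0 ∧ x * φ d = φ c)
    (hA : ∀ a ∈ A, vb (φ a) ≤ 1) :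
    ValUnbounded (vb.comap φ) ↔
      ∀ x : K, ∃ (m : ℕ) (c : Fin m → B) (s : Fin m → L),
        (∀ i, s i ∈ (vb.integer).comap ψ) ∧ x = ∑ i, φ (c i) * ψ (s i) := by
  constructor
  · -- unbounded → surjective
    intro hub x
    obtain ⟨c, d, hd, hx⟩ := hres x
    have hvd : vb (φ d) ≠ 0 := vb.ne_zero_iff.mpr hd
    set u : Γˣ := Units.mk0 (vb (φ d)) hvd with hu
    have humem : u ∈ Subgroup.closure {g : Γˣ | (g : Γ) ∈ Set.range (vb.comap φ)} :=
      Subgroup.subset_closure ⟨d, rfl⟩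
    obtain ⟨b, hb⟩ := hub u⁻¹ (inv_mem humem)
    have hb' : (vb (φ d))⁻¹ ≤ vb (φ b) := hb
    have hbd : (1 : Γ) ≤ vb (φ (b * d)) := by
      have := mul_le_mul_left hb' (vb (φ d))
      rw [inv_mul_cancel₀ hvd] at this
      simpa [map_mul] using this
    have hφbd : φ (b * d) ≠ 0 := by
      intro h
      rw [h, map_zero] at hbd
      exact absurd hbd (by simp)
    have hmem : b * d ∈ (RingHom.ker φ).primeCompl := by
      simpa [Ideal.primeCompl, RingHom.mem_ker] using hφbd
    obtain ⟨w, hw⟩ := IsLocalization.map_units (M := (RingHom.ker φ).primeCompl) L ⟨b * d, hmem⟩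
    have hψw : ψ (w : L) = φ (b * d) := by
      rw [hw]
      exact RingHom.congr_fun hψ (b * d)
    have hψs : ψ ((w⁻¹ : Lˣ) : L) = (φ (b * d))⁻¹ := by
      apply eq_inv_of_mul_eq_one_left
      rw [← hψw, ← map_mul]
      simp
    refine ⟨1, fun _ => c * b, fun _ => ((w⁻¹ : Lˣ) : L), ?_, ?_⟩
    · intro i
      have hvbd : vb (φ (b * d)) ≠ 0 := vb.ne_zero_iff.mpr hφbd
      rw [Subring.mem_comap, Valuation.mem_integer_iff, hψs, map_inv₀]
      have := mul_le_mul_right hbd (vb (φ (b * d)))⁻¹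
      rwa [mul_one, inv_mul_cancel₀ hvbd] at this
    · rw [Fin.sum_univ_one, hψs]
      have hφb : φ b ≠ 0 := fun h => hφbd (by rw [map_mul, h, zero_mul])
      field_simp [map_mul]
      linear_combination φ b * hx + x * map_mul φ b d - map_mul φ c b
  · -- surjective → unbounded
    intro hs γ hγ
    have key : ∃ x : K, vb x = (γ : Γ) := by
      induction hγ using Subgroup.closure_induction with
      | mem g hg =>
        obtain ⟨b, hb⟩ := hg
        exact ⟨φ b, hb⟩
      | one => exact ⟨1, by simp⟩
      | mul a b _ _ iha ihb =>
        obtain ⟨x, hxv⟩ := iha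
        obtain ⟨y, hyv⟩ := ihb
        exact ⟨x * y, by simp [hxv, hyv]⟩
      | inv a _ iha =>
        obtain ⟨x, hxv⟩ := iha
        exact ⟨x⁻¹, by simp [map_inv₀, hxv]⟩
    obtain ⟨x, hxv⟩ := key
    obtain ⟨m, c, s, hsint, hsum⟩ := hs x
    rcases Nat.eq_zero_or_pos m with hm | hm
    · exfalso
      subst hm
      simp only [Finset.univ_eq_empty, Finset.sum_empty] at hsum
      rw [hsum, map_zero] at hxv
      exact γ.ne_zero hxv.symm
    · have : Nonempty (Fin m) := ⟨⟨0, hm⟩⟩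
      obtain ⟨j, hj⟩ := Finite.exists_max (fun i => vb (φ (c i)))
      refine ⟨c j, ?_⟩
      have hle : vb x ≤ vb (φ (c j)) := by
        rw [hsum]
        apply Valuation.map_sum_le
        intro i _
        calc vb (φ (c i) * ψ (s i)) = vb (φ (c i)) * vb (ψ (s i)) := map_mul _ _ _
          _ ≤ vb (φ (c i)) * 1 := mul_le_mul_right (hsint i) _
          _ = vb (φ (c i)) := mul_one _
          _ ≤ vb (φ (c j)) := hj i
      rw [← hxv]
      exact hle
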